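/- For all k ≥ s ≥ 2, every k-globally branch surviving function is s-globally branch surviving: if f : ℕ → ℕ is not a path through any computable k-branching subtree of ω^{<ω}, then f is not a path through any computable s-branching subtree of ω^{<ω}. -/

import Mathlib

/-! Basic notions: subtrees of `X^{<ω}`, `k`-branching trees, `k`-trees, paths,
computable trees, relative computability (oracle machines), surviving functions,
and computable traceability. -/

/-- A subtree of `X^{<ω}`: a set of finite strings closed under initial segments. -/
def IsSubtree {X : Type*} (T : Set (List X)) : Prop :=
  ∀ σ ∈ T, ∀ τ : List X, τ <+: σ → τ ∈ T

/-- The set of immediate successors of the node `σ` in the tree `T`. -/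
def succSet {X : Type*} (T : Set (List X)) (σ : List X) : Set X :=
  {x | σ ++ [x] ∈ T}

/-- A `k`-branching tree: a subtree in which every node has either exactly `1`
or exactly `k` immediate successors. -/
def IsBranchingTree {X : Type*} (k : ℕ) (T : Set (List X)) : Prop :=
  IsSubtree T ∧ ∀ σ ∈ T, (succSet T σ).ncard = 1 ∨ (succSet T σ).ncard = k

/-- A `k`-tree: a subtree in which every node has at least `1` and at most `k`
immediate successors. -/
def IsKTree {X : Type*} (k : ℕ) (T : Set (List X)) : Prop :=
  IsSubtree T ∧ ∀ σ ∈ T, 1 ≤ (succSet T σ).ncard ∧ (succSet T σ).ncard ≤ k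

/-- `f` is a path through `T`: every finite initial segment of `f` belongs to `T`. -/
def IsPathThrough {X : Type*} (f : ℕ → X) (T : Set (List X)) : Prop :=
  ∀ n : ℕ, (List.range n).map f ∈ T

/-- A tree is computable when membership is decidable by an algorithm. -/
def ComputableTree {X : Type*} [Primcodable X] (T : Set (List X)) : Prop :=
  ComputablePred (· ∈ T)

/-- Partial functions `ℕ →. ℕ` which are partial recursive relative to the oracle `O`
(the relativization of `Nat.Partrec`). -/
inductive OracleRecursiveIn (O : ℕ → ℕ) : (ℕ →. ℕ) → Prop
  | oracle : OracleRecursiveIn O (fun n => Part.some (O n))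
  | zero : OracleRecursiveIn O (pure 0)
  | succ : OracleRecursiveIn O ↑Nat.succ
  | left : OracleRecursiveIn O ↑fun n : ℕ => n.unpair.1
  | right : OracleRecursiveIn O ↑fun n : ℕ => n.unpair.2
  | pair {f g} : OracleRecursiveIn O f → OracleRecursiveIn O g →
      OracleRecursiveIn O fun n => Nat.pair <$> f n <*> g n
  | comp {f g} : OracleRecursiveIn O f → OracleRecursiveIn O g →
      OracleRecursiveIn O fun n => g n >>= f
  | prec {f g} : OracleRecursiveIn O f → OracleRecursiveIn O g →
      OracleRecursiveIn O (Nat.unpaired fun a n =>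
        n.rec (f a) fun y IH => do let i ← IH; g (Nat.pair a (Nat.pair y i)))
  | rfind {f} : OracleRecursiveIn O f →
      OracleRecursiveIn O fun a => Nat.rfind fun n => (fun m => m = 0) <$> f (Nat.pair a n)

/-- A total function between `Primcodable` types is computable relative to the oracle `O`. -/
def OracleComputableIn (O : ℕ → ℕ) {α σ : Type*} [Primcodable α] [Primcodable σ] (f : α → σ) : Prop :=
  OracleRecursiveIn O fun n =>
    Part.bind ((Encodable.decode (α := α) n) : Part α) fun a =>
      Part.some (Encodable.encode (f a))

/-- For `k ≥ 2`, `f : ℕ → Fin (k+1)` is `k`-surviving if it is not a path through any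
computable `k`-branching subtree of `(k+1)^{<ω}`. -/
def KSurviving (k : ℕ) (f : ℕ → Fin (k + 1)) : Prop :=
  ∀ T : Set (List (Fin (k + 1))),
    IsBranchingTree k T → ComputableTree T → ¬ IsPathThrough f T

/-- The degree of the oracle `O` is computably traceable: there is a computable bound `h`
such that every total `f : ℕ → ℕ` computable in `O` admits a computable trace. -/
def ComputablyTraceableDeg (O : ℕ → ℕ) : Prop :=
  ∃ h : ℕ → ℕ, Computable h ∧
    ∀ f : ℕ → ℕ, OracleComputableIn O f →
      ∃ S : ℕ → Finset ℕ,
        (∃ L : ℕ → List ℕ, Computable L ∧ ∀ n, (L n).toFinset = S n) ∧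
        ∀ n, (S n).card ≤ h n ∧ f n ∈ S n

namespace GBS

variable (c : List ℕ → Bool) (m : ℕ)

/-- number of `z < y` with `σ ++ [z]` in the tree -/
def cnt (σ : List ℕ) (y : ℕ) : ℕ :=
  Nat.rec 0 (fun z ih => ih + (bif c (σ ++ [z]) then 1 else 0)) y

def extraB (σ : List ℕ) (y : ℕ) : Bool :=
  !c (σ ++ [y]) && decide (2 ≤ cnt c σ y)

def ecnt (σ : List ℕ) (y : ℕ) : ℕ :=
  Nat.rec 0 (fun z ih => ih + (bif extraB c σ z then 1 else 0)) y

def extra (σ : List ℕ) (y : ℕ) : Bool :=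
  extraB c σ y && decide (ecnt c σ y < m)

def zAux (τ : List ℕ) (i : ℕ) (n : ℕ) : Bool :=
  Nat.rec true (fun j ih => ih && (decide (j ≤ i) || decide (τ.getD j 0 = 0))) n

def body (τ : List ℕ) (i : ℕ) : Bool :=
  c (τ.take i) && extra c m (τ.take i) (τ.getD i 0) && zAux τ i τ.length

def gAux (τ : List ℕ) (n : ℕ) : Bool :=
  Nat.rec false (fun i ih => ih || body c m τ i) n

def g (τ : List ℕ) : Bool :=
  c τ || gAux c m τ τ.length

/- semantic lemmas -/

theorem cnt_eq_count (σ : List ℕ) (y : ℕ) :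
    cnt c σ y = Nat.count (fun z => c (σ ++ [z]) = true) y := by
  induction y with
  | zero => rfl
  | succ y ih =>
      show cnt c σ y + _ = _
      rw [Nat.count_succ, ih]
      by_cases h : c (σ ++ [y]) = true <;> simp [h]

theorem ecnt_eq_count (σ : List ℕ) (y : ℕ) :
    ecnt c σ y = Nat.count (fun z => extraB c σ z = true) y := by
  induction y with
  | zero => rfl
  | succ y ih =>
      show ecnt c σ y + _ = _
      rw [Nat.count_succ, ih]
      by_cases h : extraB c σ y = true <;> simp [h]

theorem zAux_iff (τ : List ℕ) (i n : ℕ) :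
    zAux τ i n = true ↔ ∀ j, i < j → j < n → τ.getD j 0 = 0 := by
  induction n with
  | zero => simp [zAux]
  | succ n ih =>
      show (zAux τ i n && _) = true ↔ _
      rw [Bool.and_eq_true, ih]
      constructor
      · rintro ⟨h1, h2⟩ j hij hjn
        rcases Nat.lt_succ_iff_lt_or_eq.1 hjn with h | rfl
        · exact h1 j hij h
        · simpa [Nat.not_le.2 hij] using h2
      · intro h
        refine ⟨fun j hij hjn => h j hij (hjn.trans (Nat.lt_succ_self n)), ?_⟩
        by_cases hni : n ≤ i
        · simp [hni]
        · simp only [Bool.or_eq_true, decide_eq_true_eq, beq_iff_eq]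
          right
          simpa [List.getD] using h n (Nat.not_le.1 hni) (Nat.lt_succ_self n)

theorem gAux_iff (τ : List ℕ) (n : ℕ) :
    gAux c m τ n = true ↔ ∃ i, i < n ∧ body c m τ i = true := by
  induction n with
  | zero => simp [gAux]
  | succ n ih =>
      show (gAux c m τ n || _) = true ↔ _
      rw [Bool.or_eq_true, ih]
      constructor
      · rintro (⟨i, hi, hb⟩ | hb)
        · exact ⟨i, hi.trans (Nat.lt_succ_self n), hb⟩
        · exact ⟨n, Nat.lt_succ_self n, hb⟩
      · rintro ⟨i, hi, hb⟩
        rcases Nat.lt_succ_iff_lt_or_eq.1 hi with h | rfl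
        · exact Or.inl ⟨i, h, hb⟩
        · exact Or.inr hb

theorem g_iff (τ : List ℕ) :
    g c m τ = true ↔ c τ = true ∨ ∃ i, i < τ.length ∧ c (τ.take i) = true ∧
      extra c m (τ.take i) (τ.getD i 0) = true ∧
      ∀ j, i < j → j < τ.length → τ.getD j 0 = 0 := by
  rw [g, Bool.or_eq_true, gAux_iff]
  apply or_congr Iff.rfl
  constructor
  · rintro ⟨i, hi, hb⟩
    rw [body, Bool.and_eq_true, Bool.and_eq_true, zAux_iff] at hb
    exact ⟨i, hi, hb.1.1, hb.1.2, hb.2⟩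
  · rintro ⟨i, hi, h1, h2, h3⟩
    refine ⟨i, hi, ?_⟩
    rw [body, Bool.and_eq_true, Bool.and_eq_true, zAux_iff]
    exact ⟨⟨h1, h2⟩, h3⟩

end GBS

namespace GBS

/- list helpers -/
theorem take_concat_getD (τ : List ℕ) (i : ℕ) (h : i < τ.length) :
    τ.take i ++ [τ.getD i 0] = τ.take (i + 1) := by
  rw [List.take_succ]
  congr 1
  simp [List.getD, List.getElem?_eq_getElem h]

theorem getD_append_left (σ ρ : List ℕ) (i : ℕ) (h : i < σ.length) :
    (σ ++ ρ).getD i 0 = σ.getD i 0 := by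
  simp [List.getD, List.getElem?_append_left h]

theorem getD_concat_length (σ : List ℕ) (x : ℕ) :
    (σ ++ [x]).getD σ.length 0 = x := by
  simp [List.getD]

variable {c : List ℕ → Bool} {m : ℕ}
variable (hsub : ∀ τ, c τ = true → ∀ π, π <+: τ → c π = true)

theorem extraB_not_c {σ : List ℕ} {y : ℕ} (h : extraB c σ y = true) :
    c (σ ++ [y]) = false := by
  rw [extraB, Bool.and_eq_true, Bool.not_eq_true'] at h
  exact h.1

theorem extra_extraB {σ : List ℕ} {y : ℕ} (h : extra c m σ y = true) :
    extraB c σ y = true := by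
  rw [extra, Bool.and_eq_true] at h
  exact h.1

include hsub in
theorem witness_not_lt {τ : List ℕ} {i i' : ℕ} (hlt : i < i') (hi : i < τ.length)
    (h1' : c (τ.take i') = true) (h2 : extraB c (τ.take i) (τ.getD i 0) = true) : False := by
  have hfalse : c (τ.take (i + 1)) = false := by
    rw [← take_concat_getD τ i hi]
    exact extraB_not_c h2
  have hpre : τ.take (i + 1) <+: τ.take i' := by
    have : (τ.take i').take (i + 1) = τ.take (i + 1) := by
      rw [List.take_take, min_eq_left hlt]
    rw [← this]
    exact List.take_prefix _ _
  have := hsub _ h1' _ hpre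
  rw [hfalse] at this
  exact Bool.false_ne_true this

include hsub in
theorem witness_unique {τ : List ℕ} {i i' : ℕ} (hi : i < τ.length) (hi' : i' < τ.length)
    (h1 : c (τ.take i) = true) (h2 : extraB c (τ.take i) (τ.getD i 0) = true)
    (h1' : c (τ.take i') = true) (h2' : extraB c (τ.take i') (τ.getD i' 0) = true) : i = i' := by
  rcases lt_trichotomy i i' with h | h | h
  · exact absurd (witness_not_lt hsub h hi h1' h2) not_false
  · exact h
  · exact absurd (witness_not_lt hsub h hi' h1 h2') not_false

include hsub in
/-- successor characterization at nodes of `T`. -/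
theorem g_append_iff {σ : List ℕ} (hσ : c σ = true) (x : ℕ) :
    g c m (σ ++ [x]) = true ↔ c (σ ++ [x]) = true ∨ extra c m σ x = true := by
  rw [g_iff]
  constructor
  · rintro (h | ⟨i, hi, h1, h2, _h3⟩)
    · exact Or.inl h
    · rw [List.length_append, List.length_singleton] at hi
      rcases Nat.lt_succ_iff_lt_or_eq.1 hi with hlt | rfl
      · exfalso
        have htake : (σ ++ [x]).take i = σ.take i := List.take_append_of_le_length hlt.le
        have hgd : (σ ++ [x]).getD i 0 = σ.getD i 0 := getD_append_left σ [x] i hlt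
        rw [htake, hgd] at h2
        exact witness_not_lt hsub hlt hlt (by rwa [List.take_length]) (extra_extraB h2)
      · right
        rwa [List.take_left, getD_concat_length] at h2
  · rintro (h | h)
    · exact Or.inl h
    · right
      refine ⟨σ.length, by simp, ?_, ?_, ?_⟩
      · rwa [List.take_left]
      · rwa [List.take_left, getD_concat_length]
      · intro j hj hj'
        simp at hj'
        omega

include hsub in
/-- successor characterization at nodes of `T' \ T`: only the `0` child. -/
theorem g_append_iff_off {σ : List ℕ} (hg : g c m σ = true) (hσ : c σ = false) (z : ℕ) :
    g c m (σ ++ [z]) = true ↔ z = 0 := by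
  rw [g_iff] at hg
  rcases hg with h | ⟨i, hi, h1, h2, h3⟩
  · simp [h] at hσ
  constructor
  · intro hgz
    rw [g_iff] at hgz
    rcases hgz with h | ⟨i', hi', h1', h2', h3'⟩
    · exfalso
      have := hsub _ h _ (List.prefix_append σ [z])
      rw [hσ] at this
      exact Bool.false_ne_true this
    · -- show i' = i
      have htake : (σ ++ [z]).take i = σ.take i := List.take_append_of_le_length hi.le
      have hgd : (σ ++ [z]).getD i 0 = σ.getD i 0 := getD_append_left σ [z] i hi
      have hilen : i < (σ ++ [z]).length := by simp; omega
      have heq : i' = i := by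
        refine witness_unique hsub hi' hilen h1' (extra_extraB h2') ?_ ?_
        · rwa [htake]
        · rw [htake, hgd]; exact extra_extraB h2
      subst heq
      have := h3' σ.length hi (by simp)
      rwa [getD_concat_length] at this
  · rintro rfl
    rw [g_iff]
    right
    refine ⟨i, by simp; omega, ?_, ?_, ?_⟩
    · rw [List.take_append_of_le_length hi.le]; exact h1
    · rw [List.take_append_of_le_length hi.le, getD_append_left σ [0] i hi]
      exact h2
    · intro j hj hj'
      rw [List.length_append, List.length_singleton] at hj'
      rcases Nat.lt_succ_iff_lt_or_eq.1 hj' with hlt | rfl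
      · rw [getD_append_left σ [0] j hlt]
        exact h3 j hj hlt
      · exact getD_concat_length σ 0

end GBS

namespace GBS

variable {c : List ℕ → Bool} {m : ℕ}
variable (hsub : ∀ τ, c τ = true → ∀ π, π <+: τ → c π = true)

theorem getD_take (τ : List ℕ) {n j : ℕ} (h : j < n) :
    (τ.take n).getD j 0 = τ.getD j 0 := by
  simp [List.getD, List.getElem?_take, h]

include hsub in
theorem g_prefix {τ π : List ℕ} (hg : g c m τ = true) (hpre : π <+: τ) :
    g c m π = true := by
  have hn : π.length ≤ τ.length := hpre.length_le
  have hπ : π = τ.take π.length := List.prefix_iff_eq_take.1 hpre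
  rw [g_iff] at hg
  rcases hg with h | ⟨i, hi, h1, h2, h3⟩
  · rw [g, Bool.or_eq_true]
    exact Or.inl (hsub _ h _ hpre)
  · by_cases hni : π.length ≤ i
    · rw [g, Bool.or_eq_true]
      left
      refine hsub _ h1 _ ?_
      rw [hπ]
      have : (τ.take i).take π.length = τ.take π.length := by
        rw [List.take_take, min_eq_left hni]
      rw [← this]
      exact List.take_prefix _ _
    · push_neg at hni
      rw [g_iff]
      right
      refine ⟨i, ?_, ?_, ?_, ?_⟩
      · rw [hπ, List.length_take]; omega
      · rw [hπ, List.take_take, min_eq_left hni.le]; exact h1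
      · rw [hπ, List.take_take, min_eq_left hni.le, getD_take τ hni]; exact h2
      · intro j hj hj'
        rw [hπ, List.length_take] at hj'
        have hjn : j < π.length := by omega
        rw [hπ, getD_take τ hjn]
        exact h3 j hj (by omega)

theorem cnt_le_ncard {σ : List ℕ} (hfin : {x | c (σ ++ [x]) = true}.Finite) (y : ℕ) :
    cnt c σ y ≤ {x | c (σ ++ [x]) = true}.ncard := by
  rw [cnt_eq_count, Nat.count_eq_card_filter_range, Set.ncard_eq_toFinset_card _ hfin]
  apply Finset.card_le_card
  intro z hz
  rw [Finset.mem_filter] at hz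
  rw [Set.Finite.mem_toFinset]
  exact hz.2

end GBS

namespace GBS

variable {c : List ℕ → Bool} {m : ℕ}

theorem extra_false_of_one {σ : List ℕ} (h1 : {x | c (σ ++ [x]) = true}.ncard = 1) (y : ℕ) :
    extra c m σ y = false := by
  have hfin : {x | c (σ ++ [x]) = true}.Finite := by
    by_contra hinf
    rw [Set.Infinite.ncard hinf] at h1
    exact absurd h1 one_ne_zero.symm
  have hle := cnt_le_ncard hfin y
  rw [h1] at hle
  rw [extra, extraB]
  have : ¬ (2 ≤ cnt c σ y) := by omega
  simp [this]

theorem P_infinite {σ : List ℕ} (h2 : 2 ≤ {x | c (σ ++ [x]) = true}.ncard)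
    (hfin : {x | c (σ ++ [x]) = true}.Finite) :
    {y | extraB c σ y = true}.Infinite := by
  obtain ⟨a, b, ha, hb, hab⟩ := (Set.one_lt_ncard_iff hfin).1 (by omega)
  have hinf : (Set.Ioi (max a b) \ {x | c (σ ++ [x]) = true}).Infinite :=
    (Set.Ioi_infinite (max a b)).diff hfin
  refine hinf.mono ?_
  rintro y ⟨hy1, hy2⟩
  rw [Set.mem_Ioi, max_lt_iff] at hy1
  rw [Set.mem_setOf_eq] at hy2
  rw [Set.mem_setOf_eq, extraB, Bool.and_eq_true, Bool.not_eq_true']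
  constructor
  · rw [Bool.eq_false_iff]
    intro hcy
    exact hy2 hcy
  · rw [decide_eq_true_eq, cnt_eq_count, Nat.count_eq_card_filter_range]
    have hsubs : ({a, b} : Finset ℕ) ⊆
        (Finset.range y).filter (fun z => c (σ ++ [z]) = true) := by
      intro z hz
      rw [Finset.mem_insert, Finset.mem_singleton] at hz
      rw [Finset.mem_filter, Finset.mem_range]
      rcases hz with rfl | rfl
      · exact ⟨hy1.1, ha⟩
      · exact ⟨hy1.2, hb⟩
    have := Finset.card_le_card hsubs
    rwa [Finset.card_pair hab] at this

theorem extraSet_eq_image {σ : List ℕ} (hPinf : {y | extraB c σ y = true}.Infinite) :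
    {y | extra c m σ y = true} =
      Nat.nth (fun y => extraB c σ y = true) '' Set.Iio m := by
  ext y
  simp only [Set.mem_setOf_eq, extra, Bool.and_eq_true, decide_eq_true_eq, ecnt_eq_count,
    Set.mem_image, Set.mem_Iio]
  constructor
  · rintro ⟨hP, hcm⟩
    exact ⟨Nat.count (fun z => extraB c σ z = true) y, hcm, Nat.nth_count hP⟩
  · rintro ⟨i, him, rfl⟩
    refine ⟨Nat.nth_mem_of_infinite hPinf i, ?_⟩
    rw [Nat.count_nth_of_infinite hPinf]
    exact him

theorem extraSet_ncard {σ : List ℕ} (hPinf : {y | extraB c σ y = true}.Infinite) :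
    {y | extra c m σ y = true}.ncard = m := by
  rw [extraSet_eq_image hPinf,
    Set.ncard_image_of_injective _ (Nat.nth_injective hPinf),
    ← Finset.coe_Iio, Set.ncard_coe_finset, Nat.card_Iio]

theorem extraSet_finite {σ : List ℕ} (hPinf : {y | extraB c σ y = true}.Infinite) :
    {y | extra c m σ y = true}.Finite := by
  rw [extraSet_eq_image hPinf]
  exact (Set.finite_Iio m).image _

theorem extraSet_disjoint (σ : List ℕ) :
    Disjoint {x | c (σ ++ [x]) = true} {y | extra c m σ y = true} := by
  rw [Set.disjoint_left]
  intro y hy hy'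
  rw [Set.mem_setOf_eq] at hy hy'
  have := extraB_not_c (extra_extraB hy')
  rw [hy] at this
  simp at this

end GBS

namespace GBS

theorem take_eq_map_range (l : List ℕ) (n : ℕ) :
    l.take n = (List.range (min n l.length)).map (fun j => l.getD j 0) := by
  apply List.ext_getElem
  · simp
  · intro i h1 h2
    simp only [List.getElem_take, List.getElem_map, List.getElem_range]
    rw [List.getD_eq_getElem]

theorem take_computable : Computable₂ (fun (l : List ℕ) (n : ℕ) => l.take n) := by
  have ptk : Primrec₂ (fun (l : List ℕ) (n : ℕ) =>
      (List.range (min n l.length)).map (fun j => l.getD j 0)) :=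
    Primrec.list_map
      (Primrec.list_range.comp (Primrec.nat_min.comp Primrec.snd
        (Primrec.list_length.comp Primrec.fst)))
      ((Primrec.list_getD 0).comp (Primrec.fst.comp Primrec.fst) Primrec.snd)
  refine (ptk.to_comp).of_eq ?_
  intro p
  exact (take_eq_map_range p.1 p.2).symm

theorem zAux_computable : Computable₂ (fun (τ : List ℕ) (i : ℕ) => zAux τ i τ.length) := by
  have h : Primrec₂ (fun (τ : List ℕ) (i : ℕ) => zAux τ i τ.length) := by
    have := Primrec.nat_rec' (f := fun p : List ℕ × ℕ => p.1.length)
      (g := fun _ : List ℕ × ℕ => true)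
      (h := fun (p : List ℕ × ℕ) (q : ℕ × Bool) =>
        q.2 && (decide (q.1 ≤ p.2) || decide (p.1.getD q.1 0 = 0)))
      (Primrec.list_length.comp Primrec.fst) (Primrec.const true) ?_
    · exact this
    · refine Primrec.dom_bool₂ (· && ·) |>.comp (Primrec.snd.comp Primrec.snd) ?_
      refine Primrec.dom_bool₂ (· || ·) |>.comp ?_ ?_
      · exact Primrec.nat_le.decide.comp (Primrec.fst.comp Primrec.snd)
          (Primrec.snd.comp Primrec.fst)
      · exact (Primrec.eq (α := ℕ)).decide.comp ((Primrec.list_getD 0).comp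
          (Primrec.fst.comp Primrec.fst) (Primrec.fst.comp Primrec.snd)) (Primrec.const 0)
  exact h.to_comp

open Computable in
theorem g_computable {c : List ℕ → Bool} (hc : Computable c) (m : ℕ) :
    Computable (g c m) := by
  have happ : Computable₂ (fun (σ : List ℕ) (z : ℕ) => σ ++ [z]) := Computable.list_concat
  have hcnt : Computable₂ (cnt c) :=
    Computable.nat_rec (f := fun p : List ℕ × ℕ => p.2)
      (g := fun _ : List ℕ × ℕ => (0 : ℕ))
      (h := fun (p : List ℕ × ℕ) (q : ℕ × ℕ) => q.2 + (bif c (p.1 ++ [q.1]) then 1 else 0))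
      Computable.snd (Computable.const 0)
      (Primrec.nat_add.to_comp.comp (Computable.snd.comp Computable.snd)
        (Computable.cond (hc.comp (happ.comp (Computable.fst.comp Computable.fst)
          (Computable.fst.comp Computable.snd))) (Computable.const 1) (Computable.const 0)))
  have hextraB : Computable₂ (extraB c) :=
    (Primrec.dom_bool₂ (· && ·)).to_comp.comp
      ((Primrec.dom_bool (! ·)).to_comp.comp (hc.comp happ))
      (Primrec.nat_le.decide.to_comp.comp (Computable.const 2) hcnt)
  have hecnt : Computable₂ (ecnt c) :=
    Computable.nat_rec (f := fun p : List ℕ × ℕ => p.2)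
      (g := fun _ : List ℕ × ℕ => (0 : ℕ))
      (h := fun (p : List ℕ × ℕ) (q : ℕ × ℕ) =>
        q.2 + (bif extraB c p.1 q.1 then 1 else 0))
      Computable.snd (Computable.const 0)
      (Primrec.nat_add.to_comp.comp (Computable.snd.comp Computable.snd)
        (Computable.cond (hextraB.comp (Computable.fst.comp Computable.fst)
          (Computable.fst.comp Computable.snd)) (Computable.const 1) (Computable.const 0)))
  have hextra : Computable₂ (extra c m) :=
    (Primrec.dom_bool₂ (· && ·)).to_comp.comp hextraB
      (Primrec.nat_lt.decide.to_comp.comp hecnt (Computable.const m))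
  have hbody : Computable₂ (body c m) :=
    (Primrec.dom_bool₂ (· && ·)).to_comp.comp
      ((Primrec.dom_bool₂ (· && ·)).to_comp.comp
        (hc.comp take_computable)
        (hextra.comp take_computable (Primrec.list_getD 0).to_comp))
      zAux_computable
  have hgAux : Computable (fun τ : List ℕ => gAux c m τ τ.length) :=
    Computable.nat_rec (f := fun τ : List ℕ => τ.length)
      (g := fun _ : List ℕ => false)
      (h := fun (τ : List ℕ) (q : ℕ × Bool) => q.2 || body c m τ q.1)
      Computable.list_length (Computable.const false)
      ((Primrec.dom_bool₂ (· || ·)).to_comp.comp (Computable.snd.comp Computable.snd)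
        (hbody.comp Computable.fst (Computable.fst.comp Computable.snd)))
  exact (Primrec.dom_bool₂ (· || ·)).to_comp.comp hc hgAux

end GBS

/-- for `k ≥ s ≥ 2`, every `k`-globally branch surviving function is
`s`-globally branch surviving. -/
theorem globally_branch_surviving_hierarchy (k s : ℕ) (hs : 2 ≤ s) (hsk : s ≤ k)
    (f : ℕ → ℕ)
    (hf : ∀ T : Set (List ℕ), IsBranchingTree k T → ComputableTree T →
      ¬ IsPathThrough f T) :
    ∀ T : Set (List ℕ), IsBranchingTree s T → ComputableTree T →
      ¬ IsPathThrough f T := by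
  intro T hTb hTc hpath
  obtain ⟨c, hcComp, hcT⟩ := ComputablePred.computable_iff.1 hTc
  have hmem : ∀ τ, τ ∈ T ↔ c τ = true := fun τ => iff_of_eq (congrFun hcT τ)
  have hsub : ∀ τ, c τ = true → ∀ π, π <+: τ → c π = true := by
    intro τ hτ π hπ
    exact (hmem π).1 (hTb.1 τ ((hmem τ).2 hτ) π hπ)
  set m := k - s with hm
  set T' : Set (List ℕ) := {τ | GBS.g c m τ = true} with hT'
  refine hf T' ⟨?_, ?_⟩ ?_ ?_
  · -- subtree
    intro σ hσ τ hτ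
    exact GBS.g_prefix hsub hσ hτ
  · -- branching
    intro σ hσ
    by_cases hcσ : c σ = true
    · -- σ ∈ T
      have hsucc : succSet T' σ =
          {x | c (σ ++ [x]) = true} ∪ {y | GBS.extra c m σ y = true} := by
        ext x
        show GBS.g c m (σ ++ [x]) = true ↔ _
        rw [GBS.g_append_iff hsub hcσ]
        simp only [Set.mem_union, Set.mem_setOf_eq]
      have hSeq : succSet T σ = {x | c (σ ++ [x]) = true} := by
        ext x
        exact hmem _
      rcases hTb.2 σ ((hmem σ).2 hcσ) with h1 | hss
      · -- 1-branching node: no extras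
        left
        rw [hSeq] at h1
        have hE : {y | GBS.extra c m σ y = true} = ∅ := by
          ext y
          simp [GBS.extra_false_of_one h1 y]
        rw [hsucc, hE, Set.union_empty]
        exact h1
      · -- s-branching node: exactly k - s extras
        right
        rw [hSeq] at hss
        have hfin : {x | c (σ ++ [x]) = true}.Finite := by
          by_contra hinf
          rw [Set.Infinite.ncard hinf] at hss
          omega
        have hPinf := GBS.P_infinite (c := c) (σ := σ) (by omega) hfin
        rw [hsucc, Set.ncard_union_eq (GBS.extraSet_disjoint σ) hfin
          (GBS.extraSet_finite hPinf), hss, GBS.extraSet_ncard hPinf]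
        omega
    · -- σ ∉ T : single 0-child
      left
      have h0 : succSet T' σ = {0} := by
        ext z
        show GBS.g c m (σ ++ [z]) = true ↔ _
        rw [GBS.g_append_iff_off hsub hσ (Bool.not_eq_true _ ▸ Bool.eq_false_iff.2 hcσ)]
        simp
      rw [h0]
      exact Set.ncard_singleton 0
  · -- computable
    exact ComputablePred.computable_iff.2 ⟨GBS.g c m, GBS.g_computable hcComp m, rfl⟩
  · -- path
    intro n
    show GBS.g c m _ = true
    rw [GBS.g, Bool.or_eq_true]
    exact Or.inl ((hmem _).1 (hpath n))
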